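/- Let K be a field of characteristic zero, A a K-algebra, and D a locally nilpotent K-derivation of A. Let e be an idempotent with D(e) = 0 and let s ∈ eAe satisfy D(s) = e; adopt the convention s⁰ = e. Define φ_{−s}(a) = Σ_{i≥0} ((−1)^i/i!) D^i(a) s^i and ψ_{−s}(a) = Σ_{i≥0} ((−1)^i/i!) s^i D^i(a) (finite sums for each a ∈ A). Then for every a ∈ A: (i) D(φ_{−s}(a)) = 0 and D(ψ_{−s}(a)) = 0; (ii) ae = Σ_{j≥0} (1/j!) φ_{−s}(D^j(a)) s^j; and (iii) ea = Σ_{j≥0} (1/j!) s^j ψ_{−s}(D^j(a)). -/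

import Mathlib

open Finset

private lemma tri_sum {M : Type*} [AddCommMonoid M] (f : ℕ → ℕ → M) :
    ∀ n : ℕ, ∑ j ∈ range n, ∑ i ∈ range (n - j), f i j
      = ∑ k ∈ range n, ∑ i ∈ range (k + 1), f i (k - i) := by
  intro n
  induction n with
  | zero => simp
  | succ n ih =>
    have h1 : ∀ j ∈ range (n+1), ∑ i ∈ range (n + 1 - j), f i j
        = ∑ i ∈ range (n - j), f i j + f (n - j) j := by
      intro j hj
      simp only [mem_range] at hj
      have : n + 1 - j = (n - j) + 1 := by omega
      rw [this, sum_range_succ]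
    rw [sum_congr rfl h1, sum_add_distrib,
      sum_range_succ (fun j => ∑ i ∈ range (n - j), f i j)]
    simp only [Nat.sub_self, range_zero, sum_empty, add_zero]
    rw [ih, sum_range_succ (fun k => ∑ i ∈ range (k+1), f i (k - i))]
    congr 1
    have : ∀ j ∈ range (n+1), f (n - j) j = (fun i => f i (n - i)) (n + 1 - 1 - j) := by
      intro j hj
      simp only [mem_range] at hj
      have h2 : n + 1 - 1 - j = n - j := by omega
      have h3 : n - (n - j) = j := by omega
      rw [h2]; simp only [h3]
    rw [sum_congr rfl this, Finset.sum_range_reflect (fun i => f i (n - i)) (n+1)]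

private lemma square_to_tri {M : Type*} [AddCommMonoid M] (f : ℕ → ℕ → M) (n : ℕ)
    (hf : ∀ i j, n ≤ i + j → f i j = 0) :
    ∑ j ∈ range n, ∑ i ∈ range n, f i j = ∑ k ∈ range n, ∑ i ∈ range (k+1), f i (k - i) := by
  rw [← tri_sum]
  refine sum_congr rfl fun j hj => ?_
  simp only [mem_range] at hj
  symm
  apply Finset.sum_subset (range_subset_range.2 (by omega))
  intro i hi hni
  simp only [mem_range] at hi hni
  exact hf i j (by omega)

private lemma coef_sum {K : Type*} [Field K] [CharZero K] (k : ℕ) :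
    (∑ i ∈ range (k+1), (((k-i).factorial : K))⁻¹ * ((-1:K)^i * (i.factorial:K)⁻¹))
      = if k = 0 then 1 else 0 := by
  have h1 : ∀ i ∈ range (k+1), (((k-i).factorial : K))⁻¹ * ((-1:K)^i * (i.factorial:K)⁻¹)
      = ((-1:K)^i * (k.choose i : K)) * ((k.factorial : K))⁻¹ := by
    intro i hi
    simp only [mem_range] at hi
    have h := Nat.choose_mul_factorial_mul_factorial (show i ≤ k by omega)
    have h' : ((k.choose i : K)) * (i.factorial : K) * ((k-i).factorial : K) = (k.factorial : K) := by
      exact_mod_cast congrArg (Nat.cast (R := K)) h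
    have hi' : (i.factorial : K) ≠ 0 := Nat.cast_ne_zero.mpr (Nat.factorial_ne_zero i)
    have hki : (((k-i).factorial : K)) ≠ 0 := Nat.cast_ne_zero.mpr (Nat.factorial_ne_zero _)
    have hk : ((k.factorial : K)) ≠ 0 := Nat.cast_ne_zero.mpr (Nat.factorial_ne_zero k)
    field_simp
    linear_combination (-1:K) * h'
  rw [sum_congr rfl h1, ← sum_mul]
  have h2 : (∑ i ∈ range (k+1), ((-1:K)^i * (k.choose i : K))) = if k = 0 then 1 else 0 := by
    have := Int.alternating_sum_range_choose (n := k)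
    have := congrArg (Int.cast (R := K)) this
    push_cast at this
    simpa using this
  rw [h2]
  split <;> simp [*]

private lemma conv_eval {K : Type*} [Field K] [CharZero K] {A : Type*} [AddCommGroup A]
    [Module K A] (G : ℕ → A) (n : ℕ) (hn : 1 ≤ n) (hG : ∀ k, n ≤ k → G k = 0) :
    ∑ j ∈ range n, ∑ i ∈ range n,
      (((j.factorial : K))⁻¹ * ((-1:K)^i * (i.factorial:K)⁻¹)) • G (i+j) = G 0 := by
  rw [square_to_tri (fun i j => (((j.factorial : K))⁻¹ * ((-1:K)^i * (i.factorial:K)⁻¹)) • G (i+j)) n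
    (fun i j hij => by rw [hG _ hij, smul_zero])]
  have h1 : ∀ k ∈ range n, (∑ i ∈ range (k+1),
      ((((k-i).factorial : K))⁻¹ * ((-1:K)^i * (i.factorial:K)⁻¹)) • G (i + (k-i)))
      = (if k = 0 then (1:K) else 0) • G k := by
    intro k hk
    have : ∀ i ∈ range (k+1), ((((k-i).factorial : K))⁻¹ * ((-1:K)^i * (i.factorial:K)⁻¹)) • G (i + (k-i))
        = ((((k-i).factorial : K))⁻¹ * ((-1:K)^i * (i.factorial:K)⁻¹)) • G k := by
      intro i hi
      simp only [mem_range] at hi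
      have : i + (k - i) = k := by omega
      rw [this]
    rw [sum_congr rfl this, ← sum_smul, coef_sum]
  rw [sum_congr rfl h1]
  rw [Finset.sum_eq_single_of_mem 0 (mem_range.2 hn)]
  · simp
  · intro k _ hk; simp [hk]

/-- Let `K` be a field of characteristic zero, `A` a `K`-algebra, and
`D` a locally nilpotent `K`-derivation of `A`.  Let `e` be an idempotent with `D e = 0`
and let `s ∈ eAe` satisfy `D s = e`, with the convention `s⁰ = e` (encoded by the
function `spow`).  Define `φ_{−s}(a) = Σ_{i≥0} ((−1)^i/i!) D^i(a) s^i` and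
`ψ_{−s}(a) = Σ_{i≥0} ((−1)^i/i!) s^i D^i(a)` (given here as maps `Φ`, `Ψ` characterized
pointwise by the finite sums).  Then for every `a ∈ A`:
(i) `D(Φ a) = 0` and `D(Ψ a) = 0`;
(ii) `a e = Σ_{j≥0} (1/j!) Φ(D^j a) s^j`;
(iii) `e a = Σ_{j≥0} (1/j!) s^j Ψ(D^j a)`. -/
theorem phi_psi_lemma_for_locally_nilpotent_derivation
    {K : Type*} [Field K] [CharZero K]
    {A : Type*} [NonUnitalRing A] [Module K A] [SMulCommClass K A A] [IsScalarTower K A A]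
    (D : A →ₗ[K] A)
    (hder : ∀ a b : A, D (a * b) = D a * b + a * D b)
    (hLN : ∀ a : A, ∃ m : ℕ, 1 ≤ m ∧ (D ^ m) a = 0)
    (e s : A) (hidem : e * e = e) (hDe : D e = 0)
    (hs : ∃ t : A, s = e * t * e) (hDs : D s = e)
    (spow : ℕ → A) (hspow0 : spow 0 = e) (hspowS : ∀ n : ℕ, spow (n + 1) = s * spow n)
    (Φ Ψ : A → A)
    (hΦ : ∀ (a : A) (n : ℕ), (D ^ n) a = 0 →
      Φ a = ∑ i ∈ Finset.range n, ((-1 : K) ^ i * (i.factorial : K)⁻¹) • ((D ^ i) a * spow i))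
    (hΨ : ∀ (a : A) (n : ℕ), (D ^ n) a = 0 →
      Ψ a = ∑ i ∈ Finset.range n, ((-1 : K) ^ i * (i.factorial : K)⁻¹) • (spow i * (D ^ i) a)) :
    ∀ a : A,
      D (Φ a) = 0 ∧ D (Ψ a) = 0 ∧
      (∀ n : ℕ, (D ^ n) a = 0 →
        a * e = ∑ j ∈ Finset.range n, (j.factorial : K)⁻¹ • (Φ ((D ^ j) a) * spow j)) ∧
      (∀ n : ℕ, (D ^ n) a = 0 →
        e * a = ∑ j ∈ Finset.range n, (j.factorial : K)⁻¹ • (spow j * Ψ ((D ^ j) a))) := by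
  classical
  obtain ⟨t, ht⟩ := hs
  have hes : e * s = s := by rw [ht, ← mul_assoc, ← mul_assoc, hidem]
  have hesp : ∀ n, e * spow n = spow n := by
    intro n
    cases n with
    | zero => rw [hspow0, hidem]
    | succ n => rw [hspowS, ← mul_assoc, hes]
  have hspadd : ∀ i j, spow (i + j) = spow i * spow j := by
    intro i
    induction i with
    | zero => intro j; rw [Nat.zero_add, hspow0, hesp]
    | succ i ih =>
      intro j
      have h : i + 1 + j = (i + j) + 1 := by omega
      rw [h, hspowS, ih, hspowS, mul_assoc]
  have hDsp : ∀ n, D (spow (n + 1)) = ((n + 1 : ℕ) : K) • spow n := by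
    intro n
    induction n with
    | zero =>
      rw [hspowS, hspow0, hder, hDs, hDe, mul_zero, add_zero, hidem]
      simp [hspow0]
    | succ n ih =>
      rw [hspowS (n+1), hder, hDs, ih, hesp, mul_smul_comm, ← hspowS]
      have h : ((n + 1 + 1 : ℕ) : K) = ((n + 1 : ℕ) : K) + 1 := by push_cast; ring
      rw [h, add_smul, one_smul, add_comm]
  have hDpow0 : ∀ (b : A) (n k : ℕ), (D ^ n) b = 0 → n ≤ k → (D ^ k) b = 0 := by
    intro b n k h hk
    obtain ⟨m, rfl⟩ := Nat.exists_eq_add_of_le hk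
    rw [add_comm, pow_add, Module.End.mul_apply, h, map_zero]
  have hDkj : ∀ (b : A) (i j : ℕ), (D ^ i) ((D ^ j) b) = (D ^ (i + j)) b := by
    intro b i j; rw [pow_add, Module.End.mul_apply]
  have hcoef : ∀ j : ℕ,
      ((-1 : K) ^ (j+1) * ((j+1).factorial : K)⁻¹) * ((j + 1 : ℕ) : K)
        = -((-1 : K) ^ j * (j.factorial : K)⁻¹) := by
    intro j
    have hj1 : ((j : K) + 1) ≠ 0 := Nat.cast_add_one_ne_zero j
    have hjf : (j.factorial : K) ≠ 0 := Nat.cast_ne_zero.mpr (Nat.factorial_ne_zero j)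
    rw [Nat.factorial_succ, pow_succ]
    push_cast
    field_simp
  intro a
  obtain ⟨m, hm1, hma⟩ := hLN a
  obtain ⟨N, rfl⟩ : ∃ N, m = N + 1 := ⟨m - 1, by omega⟩
  refine ⟨?_, ?_, ?_, ?_⟩
  · -- D (Φ a) = 0
    rw [hΦ a (N+1) hma, map_sum]
    have hterm : ∀ i ∈ range (N+1),
        D (((-1 : K) ^ i * (i.factorial : K)⁻¹) • ((D ^ i) a * spow i))
          = ((-1 : K) ^ i * (i.factorial : K)⁻¹) • ((D ^ (i+1)) a * spow i)
            + ((-1 : K) ^ i * (i.factorial : K)⁻¹) • ((D ^ i) a * D (spow i)) := by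
      intro i _
      rw [map_smul, hder, smul_add]
      congr 2
      rw [pow_succ', Module.End.mul_apply]
    rw [sum_congr rfl hterm, sum_add_distrib]
    rw [sum_range_succ (fun i => ((-1 : K) ^ i * (i.factorial : K)⁻¹) • ((D ^ (i+1)) a * spow i)) N]
    rw [hma, zero_mul, smul_zero, add_zero]
    rw [sum_range_succ' (fun i => ((-1 : K) ^ i * (i.factorial : K)⁻¹) • ((D ^ i) a * D (spow i))) N]
    have g0 : ((-1 : K) ^ 0 * ((0:ℕ).factorial : K)⁻¹) • ((D ^ 0) a * D (spow 0)) = 0 := by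
      rw [hspow0, hDe, mul_zero, smul_zero]
    have gsucc : ∀ j, ((-1 : K) ^ (j+1) * ((j+1).factorial : K)⁻¹) • ((D ^ (j+1)) a * D (spow (j+1)))
        = -(((-1 : K) ^ j * (j.factorial : K)⁻¹) • ((D ^ (j+1)) a * spow j)) := by
      intro j
      rw [hDsp j, mul_smul_comm, smul_smul, ← neg_smul, hcoef j]
    rw [g0, add_zero, sum_congr rfl (fun j _ => gsucc j), Finset.sum_neg_distrib]
    exact add_neg_cancel _
  · -- D (Ψ a) = 0
    rw [hΨ a (N+1) hma, map_sum]
    have hterm : ∀ i ∈ range (N+1),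
        D (((-1 : K) ^ i * (i.factorial : K)⁻¹) • (spow i * (D ^ i) a))
          = ((-1 : K) ^ i * (i.factorial : K)⁻¹) • (spow i * (D ^ (i+1)) a)
            + ((-1 : K) ^ i * (i.factorial : K)⁻¹) • (D (spow i) * (D ^ i) a) := by
      intro i _
      rw [map_smul, hder, smul_add, add_comm]
      congr 2
      rw [pow_succ', Module.End.mul_apply]
    rw [sum_congr rfl hterm, sum_add_distrib]
    rw [sum_range_succ (fun i => ((-1 : K) ^ i * (i.factorial : K)⁻¹) • (spow i * (D ^ (i+1)) a)) N]
    rw [hma, mul_zero, smul_zero, add_zero]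
    rw [sum_range_succ' (fun i => ((-1 : K) ^ i * (i.factorial : K)⁻¹) • (D (spow i) * (D ^ i) a)) N]
    have g0 : ((-1 : K) ^ 0 * ((0:ℕ).factorial : K)⁻¹) • (D (spow 0) * (D ^ 0) a) = 0 := by
      rw [hspow0, hDe, zero_mul, smul_zero]
    have gsucc : ∀ j, ((-1 : K) ^ (j+1) * ((j+1).factorial : K)⁻¹) • (D (spow (j+1)) * (D ^ (j+1)) a)
        = -(((-1 : K) ^ j * (j.factorial : K)⁻¹) • (spow j * (D ^ (j+1)) a)) := by
      intro j
      rw [hDsp j, smul_mul_assoc, smul_smul, ← neg_smul, hcoef j]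
    rw [g0, add_zero, sum_congr rfl (fun j _ => gsucc j), Finset.sum_neg_distrib]
    exact add_neg_cancel _
  · -- a * e = ...
    intro n hn
    rcases Nat.eq_zero_or_pos n with rfl | hn1
    · simp only [pow_zero, Module.End.one_apply] at hn
      simp [hn]
    · have key : ∀ j ∈ range n, (j.factorial : K)⁻¹ • (Φ ((D ^ j) a) * spow j)
          = ∑ i ∈ range n, ((j.factorial : K)⁻¹ * ((-1:K)^i * (i.factorial:K)⁻¹)) •
              ((D ^ (i+j)) a * spow (i+j)) := by
        intro j hj
        have hz : (D ^ n) ((D ^ j) a) = 0 := by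
          rw [hDkj a n j]; exact hDpow0 a n (n+j) hn (by omega)
        rw [hΦ ((D ^ j) a) n hz, sum_mul, smul_sum]
        refine sum_congr rfl fun i _ => ?_
        rw [smul_mul_assoc, smul_smul, hDkj a i j, mul_assoc, ← hspadd]
      rw [sum_congr rfl key]
      have h2 : ∑ j ∈ range n, ∑ i ∈ range n,
          ((j.factorial : K)⁻¹ * ((-1:K)^i * (i.factorial:K)⁻¹)) • ((D ^ (i+j)) a * spow (i+j))
            = (D ^ 0) a * spow 0 :=
        conv_eval (fun k => (D ^ k) a * spow k) n hn1
          (fun k hk => by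
            show (D ^ k) a * spow k = 0
            rw [hDpow0 a n k hn hk, zero_mul])
      rw [h2, pow_zero, Module.End.one_apply, hspow0]
  · -- e * a = ...
    intro n hn
    rcases Nat.eq_zero_or_pos n with rfl | hn1
    · simp only [pow_zero, Module.End.one_apply] at hn
      simp [hn]
    · have key : ∀ j ∈ range n, (j.factorial : K)⁻¹ • (spow j * Ψ ((D ^ j) a))
          = ∑ i ∈ range n, ((j.factorial : K)⁻¹ * ((-1:K)^i * (i.factorial:K)⁻¹)) •
              (spow (i+j) * (D ^ (i+j)) a) := by
        intro j hj
        have hz : (D ^ n) ((D ^ j) a) = 0 := by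
          rw [hDkj a n j]; exact hDpow0 a n (n+j) hn (by omega)
        rw [hΨ ((D ^ j) a) n hz, mul_sum, smul_sum]
        refine sum_congr rfl fun i _ => ?_
        rw [mul_smul_comm, smul_smul, hDkj a i j, ← mul_assoc (spow j) (spow i) ((D ^ (i+j)) a), ← hspadd]
        have h : j + i = i + j := Nat.add_comm j i
        rw [h]
      rw [sum_congr rfl key]
      have h2 : ∑ j ∈ range n, ∑ i ∈ range n,
          ((j.factorial : K)⁻¹ * ((-1:K)^i * (i.factorial:K)⁻¹)) • (spow (i+j) * (D ^ (i+j)) a)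
            = spow 0 * (D ^ 0) a :=
        conv_eval (fun k => spow k * (D ^ k) a) n hn1
          (fun k hk => by
            show spow k * (D ^ k) a = 0
            rw [hDpow0 a n k hn hk, mul_zero])
      rw [h2, pow_zero, Module.End.one_apply, hspow0]
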